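/- For smooth solutions (B, φ, D, ψ) of the nonlinear Maxwell-GLM system ∂_t B + ∇×E + ∇ξ = 0, ∂_t φ + ∇·H = 0, ∂_t D − ∇×H + ∇η = 0, ∂_t ψ + ∇·E = 0, where (H, ξ, E, η) = ∇𝓔(B, φ, D, ψ), the total energy satisfies ∂_t 𝓔 + ∇·(E × H + η E + ξ H) = 0. -/

import Mathlib

open scoped RealInnerProductSpace

noncomputable section

abbrev V3 := EuclideanSpace ℝ (Fin 3)

/-- Partial derivative in time. -/
def pt {Y : Type*} [NormedAddCommGroup Y] [NormedSpace ℝ Y]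
    (g : ℝ × V3 → Y) (t : ℝ) (x : V3) : Y :=
  deriv (fun τ => g (τ, x)) t

/-- Spatial partial derivative in direction `j`. -/
def pde {Y : Type*} [NormedAddCommGroup Y] [NormedSpace ℝ Y]
    (j : Fin 3) (g : V3 → Y) (x : V3) : Y :=
  fderiv ℝ g x (EuclideanSpace.single j 1)

/-- The cross product in `ℝ³`. -/
def cross (u v : V3) : V3 :=
  WithLp.toLp 2 ![u 1 * v 2 - u 2 * v 1, u 2 * v 0 - u 0 * v 2, u 0 * v 1 - u 1 * v 0]

/-- The curl of a vector field on `ℝ³`. -/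
def curlE (w : V3 → V3) (x : V3) : V3 :=
  WithLp.toLp 2 ![pde 1 (fun y => w y 2) x - pde 2 (fun y => w y 1) x,
    pde 2 (fun y => w y 0) x - pde 0 (fun y => w y 2) x,
    pde 0 (fun y => w y 1) x - pde 1 (fun y => w y 0) x]

/-- The divergence of a vector field on `ℝ³`. -/
def divE (w : V3 → V3) (x : V3) : ℝ :=
  ∑ j, pde j (fun y => w y j) x

variable (En : V3 × ℝ × V3 × ℝ → ℝ)
  (B D : ℝ × V3 → V3) (φ ψ : ℝ × V3 → ℝ)

/-- Dual variable `H = ∂𝓔/∂B`. -/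
def Hd (z : ℝ × V3) : V3 := gradient (fun b => En (b, φ z, D z, ψ z)) (B z)

/-- Dual variable `ξ = ∂𝓔/∂φ`. -/
def ξd (z : ℝ × V3) : ℝ := deriv (fun r => En (B z, r, D z, ψ z)) (φ z)

/-- Dual variable `E = ∂𝓔/∂D`. -/
def Ed (z : ℝ × V3) : V3 := gradient (fun e => En (B z, φ z, e, ψ z)) (D z)

/-- Dual variable `η = ∂𝓔/∂ψ`. -/
def ηd (z : ℝ × V3) : ℝ := deriv (fun r => En (B z, φ z, D z, r)) (ψ z)

/-! ### Auxiliary machinery -/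

abbrev X4 := V3 × ℝ × V3 × ℝ

def iB : V3 →L[ℝ] X4 := (ContinuousLinearMap.id ℝ V3).prod 0
def iφv : ℝ →L[ℝ] X4 := (0 : ℝ →L[ℝ] V3).prod ((ContinuousLinearMap.id ℝ ℝ).prod 0)
def iD : V3 →L[ℝ] X4 :=
  (0 : V3 →L[ℝ] V3).prod ((0 : V3 →L[ℝ] ℝ).prod ((ContinuousLinearMap.id ℝ V3).prod 0))
def iψv : ℝ →L[ℝ] X4 :=
  (0 : ℝ →L[ℝ] V3).prod ((0 : ℝ →L[ℝ] ℝ).prod ((0 : ℝ →L[ℝ] V3).prod (ContinuousLinearMap.id ℝ ℝ)))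

def Uq (z : ℝ × V3) : X4 := (B z, φ z, D z, ψ z)

lemma decomp4 (b : V3) (r : ℝ) (d : V3) (s : ℝ) :
    ((b, r, d, s) : X4) = iB b + iφv r + iD d + iψv s := by
  simp [iB, iφv, iD, iψv, Prod.ext_iff]

lemma gradient_apply (f : V3 → ℝ) (x : V3) (j : Fin 3) : gradient f x j = pde j f x := by
  have h : ⟪gradient f x, EuclideanSpace.single j (1:ℝ)⟫ = fderiv ℝ f x (EuclideanSpace.single j 1) := by
    rw [gradient]; exact InnerProductSpace.toDual_symm_apply
  rw [pde, ← h, EuclideanSpace.inner_single_right]; simp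

section
variable (hEn : ContDiff ℝ 2 En)
include hEn

lemma hEnF (u : X4) : HasFDerivAt En (fderiv ℝ En u) u :=
  ((hEn.differentiable (by norm_num)) u).hasFDerivAt

lemma hasF_B (z : ℝ × V3) :
    HasFDerivAt (fun b => En (b, φ z, D z, ψ z))
      ((fderiv ℝ En (Uq B D φ ψ z)).comp iB) (B z) := by
  have h1 : HasFDerivAt (fun b : V3 => ((b, φ z, D z, ψ z) : X4)) iB (B z) :=
    (hasFDerivAt_id _).prodMk (hasFDerivAt_const _ _)
  exact (hEnF En hEn (Uq B D φ ψ z)).comp (B z) h1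

lemma hasF_D (z : ℝ × V3) :
    HasFDerivAt (fun d => En (B z, φ z, d, ψ z))
      ((fderiv ℝ En (Uq B D φ ψ z)).comp iD) (D z) := by
  have h1 : HasFDerivAt (fun d : V3 => ((B z, φ z, d, ψ z) : X4)) iD (D z) :=
    (hasFDerivAt_const _ _).prodMk ((hasFDerivAt_const _ _).prodMk
      ((hasFDerivAt_id _).prodMk (hasFDerivAt_const _ _)))
  exact (hEnF En hEn (Uq B D φ ψ z)).comp (D z) h1

lemma Hd_eq (z : ℝ × V3) :
    Hd En B D φ ψ z
      = (InnerProductSpace.toDual ℝ V3).symm ((fderiv ℝ En (Uq B D φ ψ z)).comp iB) := by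
  rw [Hd, gradient, (hasF_B En B D φ ψ hEn z).fderiv]

lemma Ed_eq (z : ℝ × V3) :
    Ed En B D φ ψ z
      = (InnerProductSpace.toDual ℝ V3).symm ((fderiv ℝ En (Uq B D φ ψ z)).comp iD) := by
  rw [Ed, gradient, (hasF_D En B D φ ψ hEn z).fderiv]

lemma Hd_inner (z : ℝ × V3) (v : V3) :
    ⟪Hd En B D φ ψ z, v⟫ = fderiv ℝ En (Uq B D φ ψ z) (iB v) := by
  rw [Hd_eq En B D φ ψ hEn z]
  simp [InnerProductSpace.toDual_symm_apply]

lemma Ed_inner (z : ℝ × V3) (v : V3) :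
    ⟪Ed En B D φ ψ z, v⟫ = fderiv ℝ En (Uq B D φ ψ z) (iD v) := by
  rw [Ed_eq En B D φ ψ hEn z]
  simp [InnerProductSpace.toDual_symm_apply]

lemma ξd_eq (z : ℝ × V3) :
    ξd En B D φ ψ z = fderiv ℝ En (Uq B D φ ψ z) (iφv 1) := by
  have h1 : HasFDerivAt (fun r : ℝ => ((B z, r, D z, ψ z) : X4)) iφv (φ z) :=
    (hasFDerivAt_const _ _).prodMk ((hasFDerivAt_id _).prodMk (hasFDerivAt_const _ _))
  have h2 := (hEnF En hEn (Uq B D φ ψ z)).comp (φ z) h1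
  simp only [Function.comp_def] at h2
  rw [ξd, h2.hasDerivAt.deriv]; rfl

lemma ηd_eq (z : ℝ × V3) :
    ηd En B D φ ψ z = fderiv ℝ En (Uq B D φ ψ z) (iψv 1) := by
  have h1 : HasFDerivAt (fun r : ℝ => ((B z, φ z, D z, r) : X4)) iψv (ψ z) :=
    (hasFDerivAt_const _ _).prodMk ((hasFDerivAt_const _ _).prodMk
      ((hasFDerivAt_const _ _).prodMk (hasFDerivAt_id _)))
  have h2 := (hEnF En hEn (Uq B D φ ψ z)).comp (ψ z) h1
  simp only [Function.comp_def] at h2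
  rw [ηd, h2.hasDerivAt.deriv]; rfl

end

lemma contDiff_Uq (hB : ContDiff ℝ 1 B) (hD : ContDiff ℝ 1 D)
    (hφ : ContDiff ℝ 1 φ) (hψ : ContDiff ℝ 1 ψ) : ContDiff ℝ 1 (Uq B D φ ψ) :=
  hB.prodMk (hφ.prodMk (hD.prodMk hψ))

section
variable (hB : ContDiff ℝ 1 B) (hD : ContDiff ℝ 1 D)
    (hφ : ContDiff ℝ 1 φ) (hψ : ContDiff ℝ 1 ψ) (hEn : ContDiff ℝ 2 En)
include hB hD hφ hψ hEn

lemma contDiff_Hd : ContDiff ℝ 1 (Hd En B D φ ψ) := by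
  have h : Hd En B D φ ψ = fun z =>
      (InnerProductSpace.toDual ℝ V3).symm ((fderiv ℝ En (Uq B D φ ψ z)).comp iB) :=
    funext (Hd_eq En B D φ ψ hEn)
  rw [h]
  exact (InnerProductSpace.toDual ℝ V3).symm.contDiff.comp
    (((hEn.fderiv_right (by norm_num)).comp (contDiff_Uq B D φ ψ hB hD hφ hψ)).clm_comp
      contDiff_const)

lemma contDiff_Ed : ContDiff ℝ 1 (Ed En B D φ ψ) := by
  have h : Ed En B D φ ψ = fun z =>
      (InnerProductSpace.toDual ℝ V3).symm ((fderiv ℝ En (Uq B D φ ψ z)).comp iD) :=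
    funext (Ed_eq En B D φ ψ hEn)
  rw [h]
  exact (InnerProductSpace.toDual ℝ V3).symm.contDiff.comp
    (((hEn.fderiv_right (by norm_num)).comp (contDiff_Uq B D φ ψ hB hD hφ hψ)).clm_comp
      contDiff_const)

lemma contDiff_ξd : ContDiff ℝ 1 (ξd En B D φ ψ) := by
  have h : ξd En B D φ ψ = fun z => fderiv ℝ En (Uq B D φ ψ z) (iφv 1) :=
    funext (ξd_eq En B D φ ψ hEn)
  rw [h]
  exact ((hEn.fderiv_right (by norm_num)).comp
    (contDiff_Uq B D φ ψ hB hD hφ hψ)).clm_apply contDiff_const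

lemma contDiff_ηd : ContDiff ℝ 1 (ηd En B D φ ψ) := by
  have h : ηd En B D φ ψ = fun z => fderiv ℝ En (Uq B D φ ψ z) (iψv 1) :=
    funext (ηd_eq En B D φ ψ hEn)
  rw [h]
  exact ((hEn.fderiv_right (by norm_num)).comp
    (contDiff_Uq B D φ ψ hB hD hφ hψ)).clm_apply contDiff_const

end

/-- product/combination rule for the flux component. -/
lemma pde_flux_comp {x : V3} (j : Fin 3) {p q r s a b c d : V3 → ℝ}
    (hp : DifferentiableAt ℝ p x) (hq : DifferentiableAt ℝ q x)
    (hr : DifferentiableAt ℝ r x) (hs : DifferentiableAt ℝ s x)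
    (ha : DifferentiableAt ℝ a x) (hb : DifferentiableAt ℝ b x)
    (hc : DifferentiableAt ℝ c x) (hd : DifferentiableAt ℝ d x) :
    pde j (fun y => (p y * q y - r y * s y + a y * b y) + c y * d y) x =
      pde j p x * q x + p x * pde j q x - (pde j r x * s x + r x * pde j s x)
      + (pde j a x * b x + a x * pde j b x) + (pde j c x * d x + c x * pde j d x) := by
  have H := ((((hp.hasFDerivAt.mul hq.hasFDerivAt).sub
      (hr.hasFDerivAt.mul hs.hasFDerivAt)).add
      (ha.hasFDerivAt.mul hb.hasFDerivAt)).add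
      (hc.hasFDerivAt.mul hd.hasFDerivAt)).fderiv
  rw [show (fun y => p y * q y - r y * s y + a y * b y + c y * d y) = p * q - r * s + a * b + c * d from rfl]
  simp only [pde, H, ContinuousLinearMap.add_apply, ContinuousLinearMap.sub_apply,
    ContinuousLinearMap.smul_apply, smul_eq_mul]
  ring


/-- Total energy conservation for smooth solutions of the nonlinear Maxwell-GLM system:
`∂ₜ 𝓔 + ∇·(E × H + η E + ξ H) = 0`. -/
theorem maxwell_glm_energy_conservation
    (hB : ContDiff ℝ 1 B) (hD : ContDiff ℝ 1 D)
    (hφ : ContDiff ℝ 1 φ) (hψ : ContDiff ℝ 1 ψ) (hEn : ContDiff ℝ 2 En)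
    (hpde_B : ∀ t x, pt B t x + curlE (fun y => Ed En B D φ ψ (t, y)) x
      + gradient (fun y => ξd En B D φ ψ (t, y)) x = 0)
    (hpde_φ : ∀ t x, pt φ t x + divE (fun y => Hd En B D φ ψ (t, y)) x = 0)
    (hpde_D : ∀ t x, pt D t x - curlE (fun y => Hd En B D φ ψ (t, y)) x
      + gradient (fun y => ηd En B D φ ψ (t, y)) x = 0)
    (hpde_ψ : ∀ t x, pt ψ t x + divE (fun y => Ed En B D φ ψ (t, y)) x = 0) :
    ∀ t x, pt (fun z => En (B z, φ z, D z, ψ z)) t x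
      + divE (fun y => cross (Ed En B D φ ψ (t, y)) (Hd En B D φ ψ (t, y))
          + ηd En B D φ ψ (t, y) • Ed En B D φ ψ (t, y)
          + ξd En B D φ ψ (t, y) • Hd En B D φ ψ (t, y)) x = 0 := by
  intro t x
  -- time derivatives of the fields
  have hct : HasDerivAt (fun τ : ℝ => ((τ, x) : ℝ × V3)) (1, 0) t :=
    (hasDerivAt_id t).prodMk (hasDerivAt_const t x)
  have hBt : HasDerivAt (fun τ => B (τ, x)) (pt B t x) t := by
    have hd : DifferentiableAt ℝ (fun τ => B (τ, x)) t := by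
      have := ((hB.differentiable one_ne_zero) (t, x)).comp t hct.differentiableAt
      simpa [Function.comp_def] using this
    exact hd.hasDerivAt
  have hφt : HasDerivAt (fun τ => φ (τ, x)) (pt φ t x) t := by
    have hd : DifferentiableAt ℝ (fun τ => φ (τ, x)) t := by
      have := ((hφ.differentiable one_ne_zero) (t, x)).comp t hct.differentiableAt
      simpa [Function.comp_def] using this
    exact hd.hasDerivAt
  have hDt : HasDerivAt (fun τ => D (τ, x)) (pt D t x) t := by
    have hd : DifferentiableAt ℝ (fun τ => D (τ, x)) t := by
      have := ((hD.differentiable one_ne_zero) (t, x)).comp t hct.differentiableAt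
      simpa [Function.comp_def] using this
    exact hd.hasDerivAt
  have hψt : HasDerivAt (fun τ => ψ (τ, x)) (pt ψ t x) t := by
    have hd : DifferentiableAt ℝ (fun τ => ψ (τ, x)) t := by
      have := ((hψ.differentiable one_ne_zero) (t, x)).comp t hct.differentiableAt
      simpa [Function.comp_def] using this
    exact hd.hasDerivAt
  have hUt : HasDerivAt (fun τ => Uq B D φ ψ (τ, x))
      (pt B t x, pt φ t x, pt D t x, pt ψ t x) t :=
    hBt.prodMk (hφt.prodMk (hDt.prodMk hψt))
  -- chain rule in time
  have hA : pt (fun z => En (B z, φ z, D z, ψ z)) t x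
      = fderiv ℝ En (Uq B D φ ψ (t, x)) (pt B t x, pt φ t x, pt D t x, pt ψ t x) := by
    have h := (hEnF En hEn (Uq B D φ ψ (t, x))).comp_hasDerivAt t hUt
    simp only [Uq] at h
    unfold pt
    exact h.deriv
  -- expansion of the differential in terms of the dual variables
  have hexp : ∀ (b : V3) (r : ℝ) (d : V3) (s : ℝ),
      fderiv ℝ En (Uq B D φ ψ (t, x)) (b, r, d, s) =
        (Hd En B D φ ψ (t, x) 0 * b 0 + Hd En B D φ ψ (t, x) 1 * b 1
          + Hd En B D φ ψ (t, x) 2 * b 2)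
        + ξd En B D φ ψ (t, x) * r
        + (Ed En B D φ ψ (t, x) 0 * d 0 + Ed En B D φ ψ (t, x) 1 * d 1
          + Ed En B D φ ψ (t, x) 2 * d 2)
        + ηd En B D φ ψ (t, x) * s := by
    intro b r d s
    have hb : fderiv ℝ En (Uq B D φ ψ (t, x)) (iB b) = ⟪Hd En B D φ ψ (t, x), b⟫ :=
      (Hd_inner En B D φ ψ hEn _ b).symm
    have hdd : fderiv ℝ En (Uq B D φ ψ (t, x)) (iD d) = ⟪Ed En B D φ ψ (t, x), d⟫ :=
      (Ed_inner En B D φ ψ hEn _ d).symm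
    have hr : fderiv ℝ En (Uq B D φ ψ (t, x)) (iφv r) = ξd En B D φ ψ (t, x) * r := by
      have h1 : iφv r = r • iφv 1 := by rw [← map_smul, smul_eq_mul, mul_one]
      rw [h1, map_smul, ξd_eq En B D φ ψ hEn (t, x), smul_eq_mul, mul_comm]
    have hs' : fderiv ℝ En (Uq B D φ ψ (t, x)) (iψv s) = ηd En B D φ ψ (t, x) * s := by
      have h1 : iψv s = s • iψv 1 := by rw [← map_smul, smul_eq_mul, mul_one]
      rw [h1, map_smul, ηd_eq En B D φ ψ hEn (t, x), smul_eq_mul, mul_comm]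
    rw [decomp4, map_add, map_add, map_add, hb, hdd, hr, hs']
    simp only [PiLp.inner_apply, RCLike.inner_apply, conj_trivial, Fin.sum_univ_three]
    ring
  -- smoothness of the spatial dual fields
  have hι : ContDiff ℝ 1 (fun y : V3 => ((t, y) : ℝ × V3)) := contDiff_const.prodMk contDiff_id
  have hEf : ContDiff ℝ 1 (fun y => Ed En B D φ ψ (t, y)) :=
    (contDiff_Ed En B D φ ψ hB hD hφ hψ hEn).comp hι
  have hHf : ContDiff ℝ 1 (fun y => Hd En B D φ ψ (t, y)) :=
    (contDiff_Hd En B D φ ψ hB hD hφ hψ hEn).comp hι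
  have dE : ∀ k : Fin 3, DifferentiableAt ℝ (fun y => Ed En B D φ ψ (t, y) k) x := fun k =>
    ((contDiff_euclidean.mp hEf k).differentiable one_ne_zero).differentiableAt
  have dH : ∀ k : Fin 3, DifferentiableAt ℝ (fun y => Hd En B D φ ψ (t, y) k) x := fun k =>
    ((contDiff_euclidean.mp hHf k).differentiable one_ne_zero).differentiableAt
  have dξ : DifferentiableAt ℝ (fun y => ξd En B D φ ψ (t, y)) x :=
    (((contDiff_ξd En B D φ ψ hB hD hφ hψ hEn).comp hι).differentiable one_ne_zero).differentiableAt
  have dη : DifferentiableAt ℝ (fun y => ηd En B D φ ψ (t, y)) x :=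
    (((contDiff_ηd En B D φ ψ hB hD hφ hψ hEn).comp hι).differentiable one_ne_zero).differentiableAt
  -- component functions of the flux
  have w0 : (fun y => (cross (Ed En B D φ ψ (t, y)) (Hd En B D φ ψ (t, y))
        + ηd En B D φ ψ (t, y) • Ed En B D φ ψ (t, y)
        + ξd En B D φ ψ (t, y) • Hd En B D φ ψ (t, y)) 0)
      = (fun y => (Ed En B D φ ψ (t, y) 1 * Hd En B D φ ψ (t, y) 2
          - Ed En B D φ ψ (t, y) 2 * Hd En B D φ ψ (t, y) 1
          + ηd En B D φ ψ (t, y) * Ed En B D φ ψ (t, y) 0)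
          + ξd En B D φ ψ (t, y) * Hd En B D φ ψ (t, y) 0) := by
    funext y; simp [cross]
  have w1 : (fun y => (cross (Ed En B D φ ψ (t, y)) (Hd En B D φ ψ (t, y))
        + ηd En B D φ ψ (t, y) • Ed En B D φ ψ (t, y)
        + ξd En B D φ ψ (t, y) • Hd En B D φ ψ (t, y)) 1)
      = (fun y => (Ed En B D φ ψ (t, y) 2 * Hd En B D φ ψ (t, y) 0
          - Ed En B D φ ψ (t, y) 0 * Hd En B D φ ψ (t, y) 2
          + ηd En B D φ ψ (t, y) * Ed En B D φ ψ (t, y) 1)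
          + ξd En B D φ ψ (t, y) * Hd En B D φ ψ (t, y) 1) := by
    funext y; simp [cross]
  have w2 : (fun y => (cross (Ed En B D φ ψ (t, y)) (Hd En B D φ ψ (t, y))
        + ηd En B D φ ψ (t, y) • Ed En B D φ ψ (t, y)
        + ξd En B D φ ψ (t, y) • Hd En B D φ ψ (t, y)) 2)
      = (fun y => (Ed En B D φ ψ (t, y) 0 * Hd En B D φ ψ (t, y) 1
          - Ed En B D φ ψ (t, y) 1 * Hd En B D φ ψ (t, y) 0
          + ηd En B D φ ψ (t, y) * Ed En B D φ ψ (t, y) 2)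
          + ξd En B D φ ψ (t, y) * Hd En B D φ ψ (t, y) 2) := by
    funext y; simp [cross]
  -- componentwise PDE hypotheses
  have e1 := congrArg (fun v : V3 => v 0) (hpde_B t x)
  have e2 := congrArg (fun v : V3 => v 1) (hpde_B t x)
  have e3 := congrArg (fun v : V3 => v 2) (hpde_B t x)
  simp only [PiLp.add_apply, curlE, gradient_apply, PiLp.zero_apply, Matrix.cons_val_zero,
    Matrix.cons_val_one, Matrix.head_cons, Matrix.cons_val_two, Matrix.tail_cons] at e1 e2 e3
  have e5 := congrArg (fun v : V3 => v 0) (hpde_D t x)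
  have e6 := congrArg (fun v : V3 => v 1) (hpde_D t x)
  have e7 := congrArg (fun v : V3 => v 2) (hpde_D t x)
  simp only [PiLp.add_apply, PiLp.sub_apply, curlE, gradient_apply, PiLp.zero_apply,
    Matrix.cons_val_zero, Matrix.cons_val_one, Matrix.head_cons, Matrix.cons_val_two,
    Matrix.tail_cons] at e5 e6 e7
  have e4 := hpde_φ t x
  have e8 := hpde_ψ t x
  simp only [divE, Fin.sum_univ_three] at e4 e8
  -- assemble
  rw [hA, hexp]
  unfold divE
  rw [Fin.sum_univ_three]
  rw [w0, w1, w2,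
    pde_flux_comp 0 (dE 1) (dH 2) (dE 2) (dH 1) dη (dE 0) dξ (dH 0),
    pde_flux_comp 1 (dE 2) (dH 0) (dE 0) (dH 2) dη (dE 1) dξ (dH 1),
    pde_flux_comp 2 (dE 0) (dH 1) (dE 1) (dH 0) dη (dE 2) dξ (dH 2)]
  beta_reduce
  linear_combination Hd En B D φ ψ (t, x) 0 * e1 + Hd En B D φ ψ (t, x) 1 * e2
    + Hd En B D φ ψ (t, x) 2 * e3 + ξd En B D φ ψ (t, x) * e4
    + Ed En B D φ ψ (t, x) 0 * e5 + Ed En B D φ ψ (t, x) 1 * e6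
    + Ed En B D φ ψ (t, x) 2 * e7 + ηd En B D φ ψ (t, x) * e8

end
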